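/- Let H be a finite hypergraph and k ≥ 1 an integer. Run the parallel k-stripping process on H, and let S_i denote the set of vertices removed during iteration i. Then every vertex v ∈ S_i has depth at least i: every k-stripping sequence of H ending with v has length at least i. -/

import Mathlib

variable {V : Type} [Fintype V] [DecidableEq V]

/-- The degree of `v` in the hypergraph with edge family `E` after the vertices of `R`
(together with all edges meeting `R`) have been deleted. -/
def degIn (E : Finset (Finset V)) (R : Finset V) (v : V) : ℕ :=
  (E.filter fun e => v ∈ e ∧ e ∩ R = ∅).card

/-- The set of not-yet-removed vertices whose current degree is less than `k`:
these are the vertices removed in the next iteration of the parallel `k`-stripping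
process. -/
def lowSet (k : ℕ) (E : Finset (Finset V)) (R : Finset V) : Finset V :=
  Finset.univ.filter fun v => v ∉ R ∧ degIn E R v < k

/-- `removedSet k E n` is the set of vertices removed during the first `n` iterations of
the parallel `k`-stripping process; `lowSet k E (removedSet k E (i-1))` is the set `S_i` of
vertices removed during iteration `i` (for `i ≥ 1`). -/
def removedSet (k : ℕ) (E : Finset (Finset V)) : ℕ → Finset V
  | 0 => ∅
  | n + 1 => removedSet k E n ∪ lowSet k E (removedSet k E n)

/-- A `k`-stripping sequence: a list of distinct vertices such that each vertex has
degree less than `k` at the moment of its removal (i.e. in the hypergraph obtained by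
deleting the preceding vertices of the list and all edges containing any of them). -/
def IsStrippingSeq (k : ℕ) (E : Finset (Finset V)) (L : List V) : Prop :=
  L.Nodup ∧ ∀ j : Fin L.length, degIn E (L.take j).toFinset (L.get j) < k

lemma degIn_anti (E : Finset (Finset V)) {R R' : Finset V} (h : R ⊆ R') (v : V) :
    degIn E R' v ≤ degIn E R v := by
  apply Finset.card_le_card
  intro e he
  simp only [Finset.mem_filter] at he ⊢
  refine ⟨he.1, he.2.1, ?_⟩
  have : e ∩ R ⊆ e ∩ R' := Finset.inter_subset_inter (le_refl e) h
  rw [he.2.2] at this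
  exact Finset.subset_empty.mp this

lemma removedSet_mono (k : ℕ) (E : Finset (Finset V)) {m n : ℕ} (h : m ≤ n) :
    removedSet k E m ⊆ removedSet k E n := by
  induction n with
  | zero => simp [Nat.le_zero.mp h]
  | succ n ih =>
    rcases Nat.lt_or_ge m (n+1) with h' | h'
    · exact (ih (Nat.lt_succ_iff.mp h')).trans (by simp [removedSet])
    · have : m = n + 1 := le_antisymm h h'
      simp [this]

lemma get_mem_removedSet (k : ℕ) (E : Finset (Finset V)) (L : List V)
    (hL : IsStrippingSeq k E L) :
    ∀ n, ∀ j : Fin L.length, j.val = n → L.get j ∈ removedSet k E (n + 1) := by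
  intro n
  induction n using Nat.strong_induction_on with
  | _ n ih =>
    intro j hj
    by_cases hmem : L.get j ∈ removedSet k E n
    · exact removedSet_mono k E (Nat.le_succ n) hmem
    · have hsub : (L.take j).toFinset ⊆ removedSet k E n := by
        intro x hx
        rw [List.mem_toFinset] at hx
        obtain ⟨m, hm⟩ := List.mem_iff_get.mp hx
        have hmlt : m.val < min j.val L.length := by
          simpa [List.length_take] using m.isLt
        have hmlt' : m.val < n := by omega
        have hget : L.get ⟨m.val, by omega⟩ = x := by
          rw [← hm]
          simp
        have := ih m.val hmlt' ⟨m.val, by omega⟩ rfl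
        rw [hget] at this
        exact removedSet_mono k E (by omega) this
      have hdeg : degIn E (removedSet k E n) (L.get j) < k :=
        lt_of_le_of_lt (degIn_anti E hsub _) (hL.2 j)
      have hlow : L.get j ∈ lowSet k E (removedSet k E n) := by
        simp only [lowSet, Finset.mem_filter]
        exact ⟨Finset.mem_univ _, hmem, hdeg⟩
      show L.get j ∈ removedSet k E n ∪ lowSet k E (removedSet k E n)
      exact Finset.mem_union_right _ hlow

/-- Every vertex `v ∈ S_i` has depth at least `i`: every `k`-stripping sequence ending
with `v` has length at least `i`. -/
theorem stmt18 (k : ℕ) (hk : 1 ≤ k) (E : Finset (Finset V)) (hE : ∀ e ∈ E, e.Nonempty)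
    (i : ℕ) (hi : 1 ≤ i) (v : V) (hv : v ∈ lowSet k E (removedSet k E (i - 1)))
    (L : List V) (hL : IsStrippingSeq k E L) (hlast : L.getLast? = some v) :
    i ≤ L.length := by
  have hne : L ≠ [] := by
    intro h; rw [h] at hlast; simp at hlast
  have hlen : 0 < L.length := List.length_pos_iff.mpr hne
  have hvget : L.get ⟨L.length - 1, by omega⟩ = v := by
    have := List.getLast?_eq_getLast hne
    rw [this] at hlast
    have := Option.some_injective _ hlast
    simp [← this, List.getLast_eq_getElem]
  have hvm : v ∈ removedSet k E (L.length - 1 + 1) := by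
    rw [← hvget]
    exact get_mem_removedSet k E L hL (L.length - 1) _ rfl
  have hvnot : v ∉ removedSet k E (i - 1) := by
    simp only [lowSet, Finset.mem_filter] at hv
    exact hv.2.1
  by_contra h
  exact hvnot (removedSet_mono k E (by omega) hvm)
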